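/- Fix δ ∈ (0,1) and set p = (1−δ)/2. For every pattern π ∈ Av(231), the series Σ_{σ ∈ Av(231)} p^{|σ|−1}(1−p)^{|σ|+1} · c-occ(π,σ) (over 231-avoiding permutations of all sizes n ≥ 1) converges, and δ · Σ_{σ ∈ Av(231)} p^{|σ|−1}(1−p)^{|σ|+1} · c-occ(π,σ) = Σ_{σ ∈ Av(231)} p^{|σ|−1}(1−p)^{|σ|+1} · 𝟙{σ realizes π at its maximum}. -/

import Mathlib

open Finset Filter
open scoped Topology Classical

noncomputable section

/-- The permutation 231 (as a permutation of `Fin 3`, 0-indexed). -/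
def perm231 : Equiv.Perm (Fin 3) := ⟨![1, 2, 0], ![2, 0, 1], by decide, by decide⟩

/-- The permutation 321 (as a permutation of `Fin 3`, 0-indexed). -/
def perm321 : Equiv.Perm (Fin 3) := ⟨![2, 1, 0], ![2, 1, 0], by decide, by decide⟩

/-- `σ` contains the pattern `π`: some (not necessarily consecutive) subsequence of `σ`
is in the same relative order as `π`. -/
def Contains {k n : ℕ} (π : Equiv.Perm (Fin k)) (σ : Equiv.Perm (Fin n)) : Prop :=
  ∃ f : Fin k → Fin n, StrictMono f ∧ ∀ a b : Fin k, σ (f a) < σ (f b) ↔ π a < π b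

/-- `σ` avoids the pattern `π`. -/
def Avoids {k n : ℕ} (π : Equiv.Perm (Fin k)) (σ : Equiv.Perm (Fin n)) : Prop := ¬ Contains π σ

/-- The set `Avⁿ(ρ)` of `ρ`-avoiding permutations of size `n`. -/
def AvSet {k : ℕ} (ρ : Equiv.Perm (Fin k)) (n : ℕ) : Finset (Equiv.Perm (Fin n)) :=
  Finset.univ.filter fun σ => Avoids ρ σ

/-- The (0-indexed) value of `σ` at the (0-indexed) position `j`, with junk value `0`
out of range. -/
def pv {n : ℕ} (σ : Equiv.Perm (Fin n)) (j : ℕ) : ℕ :=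
  if h : j < n then (σ ⟨j, h⟩ : ℕ) else 0

/-- The length-`k` window of `σ` starting at the (0-indexed) position `i` is in the same
relative order as `π`, i.e. `pat_{[i+1,i+k]}(σ) = π` (in the 1-indexed notation). -/
def WindowMatch {k n : ℕ} (π : Equiv.Perm (Fin k)) (σ : Equiv.Perm (Fin n)) (i : ℕ) : Prop :=
  ∀ a b : Fin k, (pv σ (i + a) < pv σ (i + b) ↔ π a < π b)

/-- `π` occurs consecutively in `σ` at the (0-indexed) position `i`. -/
def IsOccAt {k n : ℕ} (π : Equiv.Perm (Fin k)) (σ : Equiv.Perm (Fin n)) (i : ℕ) : Prop :=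
  i + k ≤ n ∧ WindowMatch π σ i

/-- Number of consecutive occurrences of `π` in the (0-indexed) window `[lo, hi)` of `σ`.
This equals `c-occ(π, pat_{[lo+1,hi]}(σ))` in the notation of the paper. -/
def cOccWin {k n : ℕ} (π : Equiv.Perm (Fin k)) (σ : Equiv.Perm (Fin n)) (lo hi : ℕ) : ℕ :=
  ((Finset.range n).filter fun i => lo ≤ i ∧ i + k ≤ hi ∧ WindowMatch π σ i).card

/-- `c-occ(π,σ)`: the number of consecutive occurrences of `π` in `σ`. -/
def cOcc {k n : ℕ} (π : Equiv.Perm (Fin k)) (σ : Equiv.Perm (Fin n)) : ℕ := cOccWin π σ 0 n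

/-- `|LRMax(π)|`: the number of left-to-right maxima of `π`. -/
def lrMax {k : ℕ} (π : Equiv.Perm (Fin k)) : ℕ :=
  (Finset.univ.filter fun i : Fin k => ∀ j : Fin k, j < i → π j < π i).card

/-- `|RLMax(π)|`: the number of right-to-left maxima of `π`. -/
def rlMax {k : ℕ} (π : Equiv.Perm (Fin k)) : ℕ :=
  (Finset.univ.filter fun i : Fin k => ∀ j : Fin k, i < j → π j < π i).card

/-- `P_231(π) = 2^(|LRMax(π)| + |RLMax(π)|) / 2^(2|π|)`. -/
def P231 {k : ℕ} (π : Equiv.Perm (Fin k)) : ℝ :=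
  2 ^ (lrMax π + rlMax π) / 2 ^ (2 * k)

end

noncomputable section

/-- `σ` realizes `π` at its maximum: writing `m = indmax(π)` and `ℓ = indmax(σ)`
(0-indexed positions of the maximum values), the interval `J = [ℓ−m+1, ℓ+k−m]` (1-indexed)
is contained in `[1,|σ|]` and `pat_J(σ) = π`. -/
def RealizesAtMax {k n : ℕ} (π : Equiv.Perm (Fin k)) (σ : Equiv.Perm (Fin n)) : Prop :=
  ∃ (hk : 0 < k) (hn : 0 < n),
    ((π⁻¹ ⟨k - 1, by omega⟩ : Fin k) : ℕ) ≤ ((σ⁻¹ ⟨n - 1, by omega⟩ : Fin n) : ℕ) ∧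
    IsOccAt π σ
      (((σ⁻¹ ⟨n - 1, by omega⟩ : Fin n) : ℕ) - ((π⁻¹ ⟨k - 1, by omega⟩ : Fin k) : ℕ))

end


noncomputable section AuxProof

lemma contains231_iff {n : ℕ} (σ : Equiv.Perm (Fin n)) :
    Contains perm231 σ ↔ ∃ i j l : Fin n, i < j ∧ j < l ∧ σ l < σ i ∧ σ i < σ j := by
  constructor
  · rintro ⟨f, hmono, hiff⟩
    exact ⟨f 0, f 1, f 2, hmono (by decide), hmono (by decide),
      (hiff 2 0).2 (by decide), (hiff 0 1).2 (by decide)⟩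
  · rintro ⟨i, j, l, hij, hjl, h1, h2⟩
    have h3 : σ l < σ j := h1.trans h2
    refine ⟨![i, j, l], ?_, ?_⟩
    · intro a b hab
      fin_cases a <;> fin_cases b <;>
        first
        | exact absurd hab (by decide)
        | simpa using hij
        | simpa using hjl
        | simpa using hij.trans hjl
    · intro a b
      fin_cases a <;> fin_cases b <;> simp [perm231] <;>
        first
        | exact h1
        | exact h2
        | exact h3
        | exact h1.le
        | exact h2.le
        | exact h3.le

/-- The gluing map: `glue n ℓ h α β = α · (max) · (β + ℓ)`. -/
def glueF (n ℓ : ℕ) (h : ℓ < n) (α : Equiv.Perm (Fin ℓ)) (β : Equiv.Perm (Fin (n - 1 - ℓ))) :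
    Fin n → Fin n := fun j =>
  if hj : (j : ℕ) < ℓ then ⟨α ⟨j, hj⟩, lt_trans (α ⟨j, hj⟩).isLt h⟩
  else if hj2 : (j : ℕ) = ℓ then ⟨n - 1, by omega⟩
  else ⟨ℓ + (β ⟨(j : ℕ) - ℓ - 1, by have := j.isLt; omega⟩ : ℕ),
        by have := (β ⟨(j : ℕ) - ℓ - 1, by have := j.isLt; omega⟩).isLt; omega⟩

variable {n ℓ : ℕ} {h : ℓ < n} {α : Equiv.Perm (Fin ℓ)} {β : Equiv.Perm (Fin (n - 1 - ℓ))}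

lemma glueF_val_lt {j : Fin n} (hj : (j : ℕ) < ℓ) :
    ((glueF n ℓ h α β j : Fin n) : ℕ) = (α ⟨j, hj⟩ : ℕ) := by
  unfold glueF; rw [dif_pos hj]

lemma glueF_val_eq {j : Fin n} (hj : (j : ℕ) = ℓ) :
    ((glueF n ℓ h α β j : Fin n) : ℕ) = n - 1 := by
  unfold glueF; rw [dif_neg (by omega), dif_pos hj]

lemma glueF_val_gt {j : Fin n} (hj : ℓ < (j : ℕ)) (hj2 : (j : ℕ) - ℓ - 1 < n - 1 - ℓ) :
    ((glueF n ℓ h α β j : Fin n) : ℕ) = ℓ + (β ⟨(j : ℕ) - ℓ - 1, hj2⟩ : ℕ) := by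
  unfold glueF; rw [dif_neg (by omega), dif_neg (by omega)]

lemma glueF_inj (n ℓ : ℕ) (h : ℓ < n) (α : Equiv.Perm (Fin ℓ)) (β : Equiv.Perm (Fin (n - 1 - ℓ))) :
    Function.Injective (glueF n ℓ h α β) := by
  intro x y hxy
  have hxy' := congrArg Fin.val hxy
  have hxn := x.isLt; have hyn := y.isLt
  rcases Nat.lt_trichotomy (x : ℕ) ℓ with hx | hx | hx <;>
    rcases Nat.lt_trichotomy (y : ℕ) ℓ with hy | hy | hy
  · rw [glueF_val_lt hx, glueF_val_lt hy] at hxy'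
    have : (⟨(x:ℕ), hx⟩ : Fin ℓ) = ⟨(y:ℕ), hy⟩ := α.injective (Fin.ext hxy')
    exact Fin.ext (congrArg (Fin.val : Fin ℓ → ℕ) this)
  · rw [glueF_val_lt hx, glueF_val_eq hy] at hxy'
    exact absurd hxy' (by have := (α ⟨(x:ℕ), hx⟩).isLt; omega)
  · have hy2 : (y:ℕ) - ℓ - 1 < n - 1 - ℓ := by omega
    rw [glueF_val_lt hx, glueF_val_gt hy hy2] at hxy'
    exact absurd hxy' (by have := (α ⟨(x:ℕ), hx⟩).isLt; omega)
  · rw [glueF_val_eq hx, glueF_val_lt hy] at hxy'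
    exact absurd hxy' (by have := (α ⟨(y:ℕ), hy⟩).isLt; omega)
  · exact Fin.ext (by omega)
  · have hy2 : (y:ℕ) - ℓ - 1 < n - 1 - ℓ := by omega
    rw [glueF_val_eq hx, glueF_val_gt hy hy2] at hxy'
    exact absurd hxy' (by have := (β ⟨(y:ℕ) - ℓ - 1, hy2⟩).isLt; omega)
  · have hx2 : (x:ℕ) - ℓ - 1 < n - 1 - ℓ := by omega
    rw [glueF_val_gt hx hx2, glueF_val_lt hy] at hxy'
    exact absurd hxy' (by have := (α ⟨(y:ℕ), hy⟩).isLt; omega)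
  · have hx2 : (x:ℕ) - ℓ - 1 < n - 1 - ℓ := by omega
    rw [glueF_val_gt hx hx2, glueF_val_eq hy] at hxy'
    exact absurd hxy' (by have := (β ⟨(x:ℕ) - ℓ - 1, hx2⟩).isLt; omega)
  · have hx2 : (x:ℕ) - ℓ - 1 < n - 1 - ℓ := by omega
    have hy2 : (y:ℕ) - ℓ - 1 < n - 1 - ℓ := by omega
    rw [glueF_val_gt hx hx2, glueF_val_gt hy hy2] at hxy'
    have : (⟨(x:ℕ) - ℓ - 1, hx2⟩ : Fin (n-1-ℓ)) = ⟨(y:ℕ) - ℓ - 1, hy2⟩ :=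
      β.injective (Fin.ext (by omega))
    have := congrArg (Fin.val : Fin (n-1-ℓ) → ℕ) this
    simp only at this
    exact Fin.ext (by omega)

def glue (n ℓ : ℕ) (h : ℓ < n) (α : Equiv.Perm (Fin ℓ)) (β : Equiv.Perm (Fin (n - 1 - ℓ))) :
    Equiv.Perm (Fin n) :=
  Equiv.ofBijective _ (Finite.injective_iff_bijective.mp (glueF_inj n ℓ h α β))

lemma glue_apply (j : Fin n) : glue n ℓ h α β j = glueF n ℓ h α β j := rfl

lemma pv_glue (j : ℕ) :
    pv (glue n ℓ h α β) j =
      if j < ℓ then pv α j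
      else if j = ℓ then n - 1
      else if j < n then ℓ + pv β (j - ℓ - 1) else 0 := by
  unfold pv
  by_cases hjn : j < n
  · rw [dif_pos hjn, glue_apply]
    by_cases h1 : j < ℓ
    · rw [if_pos h1, glueF_val_lt (j := ⟨j, hjn⟩) h1, dif_pos h1]
    · by_cases h2 : j = ℓ
      · rw [if_neg h1, if_pos h2, glueF_val_eq (j := ⟨j, hjn⟩) h2]
      · have h3 : ℓ < j := by omega
        have h4 : j - ℓ - 1 < n - 1 - ℓ := by omega
        rw [if_neg h1, if_neg h2, if_pos hjn,
          glueF_val_gt (j := ⟨j, hjn⟩) h3 h4, dif_pos h4]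
  · rw [dif_neg hjn, if_neg (by omega), if_neg (by omega), if_neg hjn]

lemma glueF_val_le (j : Fin n) : ((glueF n ℓ h α β j : Fin n) : ℕ) ≤ n - 1 := by
  have := (glueF n ℓ h α β j).isLt; omega

lemma glueF_val_ge {j : Fin n} (hj : ℓ < (j : ℕ)) :
    ℓ ≤ ((glueF n ℓ h α β j : Fin n) : ℕ) := by
  have hj2 : (j:ℕ) - ℓ - 1 < n - 1 - ℓ := by have := j.isLt; omega
  rw [glueF_val_gt hj hj2]; omega

lemma glueF_val_lt_max {j : Fin n} (hj : ℓ < (j : ℕ)) :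
    ((glueF n ℓ h α β j : Fin n) : ℕ) < n - 1 := by
  have hj2 : (j:ℕ) - ℓ - 1 < n - 1 - ℓ := by have := j.isLt; omega
  rw [glueF_val_gt hj hj2]
  have := (β ⟨(j:ℕ) - ℓ - 1, hj2⟩).isLt; omega

lemma contains_glue_iff :
    Contains perm231 (glue n ℓ h α β) ↔ Contains perm231 α ∨ Contains perm231 β := by
  rw [contains231_iff, contains231_iff α, contains231_iff β]
  constructor
  · rintro ⟨i, j, l, hij, hjl, h1, h2⟩
    rw [Fin.lt_def] at hij hjl h1 h2
    simp only [glue_apply] at h1 h2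
    rcases Nat.lt_trichotomy (l : ℕ) ℓ with hl | hl | hl
    · -- all three in α
      have hiℓ : (i:ℕ) < ℓ := by omega
      have hjℓ : (j:ℕ) < ℓ := by omega
      rw [glueF_val_lt hiℓ] at h1 h2
      rw [glueF_val_lt hjℓ] at h2
      rw [glueF_val_lt hl] at h1
      exact Or.inl ⟨⟨i, hiℓ⟩, ⟨j, hjℓ⟩, ⟨l, hl⟩, Fin.mk_lt_mk.mpr hij,
        Fin.mk_lt_mk.mpr hjl, Fin.lt_def.mpr h1, Fin.lt_def.mpr h2⟩
    · -- l = ℓ : impossible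
      exfalso
      rw [glueF_val_eq hl] at h1
      have := glueF_val_le (n := n) (ℓ := ℓ) (h := h) (α := α) (β := β) i
      omega
    · -- l > ℓ: all three in β
      have hge := glueF_val_ge (n := n) (ℓ := ℓ) (h := h) (α := α) (β := β) hl
      have hiℓ : ℓ < (i:ℕ) := by
        rcases Nat.lt_trichotomy (i : ℕ) ℓ with hi | hi | hi
        · exfalso; rw [glueF_val_lt hi] at h1; omega
        · exfalso; rw [glueF_val_eq hi] at h2
          have := glueF_val_le (n := n) (ℓ := ℓ) (h := h) (α := α) (β := β) j
          omega
        · exact hi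
      have hjℓ : ℓ < (j:ℕ) := by omega
      have hi2 : (i:ℕ) - ℓ - 1 < n - 1 - ℓ := by have := i.isLt; omega
      have hj2 : (j:ℕ) - ℓ - 1 < n - 1 - ℓ := by have := j.isLt; omega
      have hl2 : (l:ℕ) - ℓ - 1 < n - 1 - ℓ := by have := l.isLt; omega
      rw [glueF_val_gt hiℓ hi2] at h1 h2
      rw [glueF_val_gt hjℓ hj2] at h2
      rw [glueF_val_gt hl hl2] at h1
      exact Or.inr ⟨⟨(i:ℕ) - ℓ - 1, hi2⟩, ⟨(j:ℕ) - ℓ - 1, hj2⟩, ⟨(l:ℕ) - ℓ - 1, hl2⟩,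
        Fin.mk_lt_mk.mpr (by omega), Fin.mk_lt_mk.mpr (by omega),
        Fin.lt_def.mpr (by omega), Fin.lt_def.mpr (by omega)⟩
  · rintro (⟨i, j, l, hij, hjl, h1, h2⟩ | ⟨i, j, l, hij, hjl, h1, h2⟩)
    · have hbα : ∀ x : Fin ℓ, (x : ℕ) < n := fun x => lt_trans x.isLt h
      have hvalα : ∀ x : Fin ℓ,
          ((glueF n ℓ h α β ⟨(x:ℕ), hbα x⟩ : Fin n) : ℕ) = (α x : ℕ) := by
        intro x
        rw [glueF_val_lt (j := ⟨(x:ℕ), hbα x⟩) x.isLt]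
      refine ⟨⟨i, hbα i⟩, ⟨j, hbα j⟩, ⟨l, hbα l⟩,
        by rw [Fin.mk_lt_mk]; exact hij, by rw [Fin.mk_lt_mk]; exact hjl, ?_, ?_⟩
      · rw [Fin.lt_def]
        simp only [glue_apply, hvalα]
        exact h1
      · rw [Fin.lt_def]
        simp only [glue_apply, hvalα]
        exact h2
    · have hb : ∀ x : Fin (n - 1 - ℓ), ℓ + 1 + (x:ℕ) < n := by
        intro x; have := x.isLt; omega
      have hgt : ∀ x : Fin (n - 1 - ℓ), ℓ < ((⟨ℓ + 1 + (x:ℕ), hb x⟩ : Fin n) : ℕ) := by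
        intro x; simp; omega
      have hsub : ∀ x : Fin (n - 1 - ℓ),
          ((⟨ℓ + 1 + (x:ℕ), hb x⟩ : Fin n) : ℕ) - ℓ - 1 < n - 1 - ℓ := by
        intro x; have := x.isLt; simp; omega
      have hval : ∀ x : Fin (n - 1 - ℓ),
          ((glueF n ℓ h α β ⟨ℓ + 1 + (x:ℕ), hb x⟩ : Fin n) : ℕ) = ℓ + (β x : ℕ) := by
        intro x
        rw [glueF_val_gt (hgt x) (hsub x)]
        have he : (⟨((⟨ℓ + 1 + (x:ℕ), hb x⟩ : Fin n) : ℕ) - ℓ - 1, hsub x⟩ : Fin (n - 1 - ℓ)) = x :=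
          Fin.ext (by simp; omega)
        rw [he]
      have hij' : (i:ℕ) < j := hij
      have hjl' : (j:ℕ) < l := hjl
      refine ⟨⟨ℓ + 1 + (i:ℕ), hb i⟩, ⟨ℓ + 1 + (j:ℕ), hb j⟩, ⟨ℓ + 1 + (l:ℕ), hb l⟩,
        by rw [Fin.mk_lt_mk]; omega, by rw [Fin.mk_lt_mk]; omega, ?_, ?_⟩
      · rw [Fin.lt_def]
        simp only [glue_apply, hval]
        have h1' : (β l : ℕ) < β i := h1
        omega
      · rw [Fin.lt_def]
        simp only [glue_apply, hval]
        have h2' : (β i : ℕ) < β j := h2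
        omega

lemma avoids_glue_iff :
    Avoids perm231 (glue n ℓ h α β) ↔ Avoids perm231 α ∧ Avoids perm231 β := by
  unfold Avoids
  rw [contains_glue_iff]; tauto

lemma glue_symm_max (pf : n - 1 < n) :
    (((glue n ℓ h α β)⁻¹ ⟨n - 1, pf⟩ : Fin n) : ℕ) = ℓ := by
  have : (glue n ℓ h α β) ⟨ℓ, h⟩ = ⟨n - 1, pf⟩ := by
    apply Fin.ext
    rw [glue_apply]
    exact glueF_val_eq rfl
  have := this ▸ (Equiv.symm_apply_apply (glue n ℓ h α β) ⟨ℓ, h⟩)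
  rw [show (glue n ℓ h α β)⁻¹ = (glue n ℓ h α β).symm from rfl, this]






section Windows

variable {k : ℕ} {π : Equiv.Perm (Fin k)}

lemma pv_le_max {σ : Equiv.Perm (Fin n)} (j : ℕ) : pv σ j ≤ n - 1 := by
  unfold pv
  split_ifs with hj
  · have := (σ ⟨j, hj⟩).isLt; omega
  · omega

lemma wm_lower {i : ℕ} (hik : i + k ≤ ℓ) :
    WindowMatch π (glue n ℓ h α β) i ↔ WindowMatch π α i := by
  unfold WindowMatch
  have hval : ∀ a : Fin k, pv (glue n ℓ h α β) (i + a) = pv α (i + a) := by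
    intro a
    rw [pv_glue, if_pos (by have := a.isLt; omega)]
  constructor <;> intro hw a b <;> have := hw a b <;>
    rw [hval a, hval b] at * <;> exact this

lemma wm_upper {i : ℕ} (hi : ℓ + 1 ≤ i) (hik : i + k ≤ n) :
    WindowMatch π (glue n ℓ h α β) i ↔ WindowMatch π β (i - ℓ - 1) := by
  unfold WindowMatch
  have hval : ∀ a : Fin k,
      pv (glue n ℓ h α β) (i + a) = ℓ + pv β (i - ℓ - 1 + a) := by
    intro a
    have ha := a.isLt
    have he : i + (a:ℕ) - ℓ - 1 = i - ℓ - 1 + (a:ℕ) := by omega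
    rw [pv_glue, if_neg (by omega), if_neg (by omega), if_pos (by omega), he]
  constructor <;> intro hw a b <;> have := hw a b
  · rw [hval a, hval b] at this
    rw [← this]; omega
  · rw [hval a, hval b, ← this]; omega

lemma pv_glue_at_max : pv (glue n ℓ h α β) ℓ = n - 1 := by
  rw [pv_glue, if_neg (by omega), if_pos rfl]

lemma wm_straddle {i : ℕ} (hk0 : 0 < k) (hik : i + k ≤ n) (hiℓ : i ≤ ℓ) (hℓik : ℓ < i + k)
    (hw : WindowMatch π (glue n ℓ h α β) i) :
    i + ((π⁻¹ ⟨k - 1, by omega⟩ : Fin k) : ℕ) = ℓ := by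
  set m : Fin k := π⁻¹ ⟨k - 1, by omega⟩ with hm
  set a₀ : Fin k := ⟨ℓ - i, by omega⟩ with ha₀
  by_cases hc : a₀ = m
  · have : (a₀ : ℕ) = ℓ - i := rfl
    rw [← hc]; omega
  · exfalso
    have hπa : π a₀ < π m := by
      have hval : (π m : ℕ) = k - 1 := by
        have hh : π m = ⟨k - 1, by omega⟩ := Equiv.apply_symm_apply π _
        rw [hh]
      have h1 := (π a₀).isLt
      have h2 : (π a₀ : ℕ) ≠ (π m : ℕ) := fun hh => hc (π.injective (Fin.ext hh))
      rw [Fin.lt_def]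
      omega
    have := (hw a₀ m).mpr hπa
    have hpa : pv (glue n ℓ h α β) (i + a₀) = n - 1 := by
      have hv : (a₀ : ℕ) = ℓ - i := rfl
      have : i + (a₀ : ℕ) = ℓ := by omega
      rw [this, pv_glue_at_max]
    have hpb := pv_le_max (σ := glue n ℓ h α β) (i + (m : ℕ))
    omega

lemma realizes_glue_iff (hk0 : 0 < k) :
    RealizesAtMax π (glue n ℓ h α β) ↔
      ((π⁻¹ ⟨k - 1, by omega⟩ : Fin k) : ℕ) ≤ ℓ ∧
      (ℓ - ((π⁻¹ ⟨k - 1, by omega⟩ : Fin k) : ℕ)) + k ≤ n ∧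
      WindowMatch π (glue n ℓ h α β) (ℓ - ((π⁻¹ ⟨k - 1, by omega⟩ : Fin k) : ℕ)) := by
  have hmax : ∀ pf : n - 1 < n, (((glue n ℓ h α β)⁻¹ ⟨n - 1, pf⟩ : Fin n) : ℕ) = ℓ :=
    fun pf => glue_symm_max pf
  unfold RealizesAtMax IsOccAt
  constructor
  · rintro ⟨hk', hn', h1, h2, h3⟩
    rw [hmax] at h1 h2 h3
    exact ⟨h1, h2, h3⟩
  · rintro ⟨h1, h2, h3⟩
    refine ⟨hk0, by omega, ?_, ?_, ?_⟩ <;> rw [hmax]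
    exacts [h1, h2, h3]

lemma cOcc_glue (hk0 : 0 < k) :
    cOcc π (glue n ℓ h α β) =
      cOcc π α + cOcc π β +
        (if RealizesAtMax π (glue n ℓ h α β) then 1 else 0) := by
  classical
  set σ := glue n ℓ h α β with hσ
  set m : ℕ := ((π⁻¹ ⟨k - 1, by omega⟩ : Fin k) : ℕ) with hm
  have hmk : m < k := (π⁻¹ ⟨k - 1, by omega⟩ : Fin k).isLt
  set S1 : Finset ℕ := (Finset.range ℓ).filter (fun i => 0 ≤ i ∧ i + k ≤ ℓ ∧ WindowMatch π α i)
    with hS1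
  set S2' : Finset ℕ := (Finset.range (n - 1 - ℓ)).filter
    (fun i => 0 ≤ i ∧ i + k ≤ n - 1 - ℓ ∧ WindowMatch π β i) with hS2'
  set S2 : Finset ℕ := S2'.image (· + (ℓ + 1)) with hS2
  set S3 : Finset ℕ := if RealizesAtMax π σ then {ℓ - m} else ∅ with hS3
  have hrl := realizes_glue_iff (n := n) (ℓ := ℓ) (h := h) (α := α) (β := β) (π := π) hk0
  rw [← hm, ← hσ] at hrl
  have hsplit : (Finset.range n).filter (fun i => 0 ≤ i ∧ i + k ≤ n ∧ WindowMatch π σ i)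
      = S1 ∪ S2 ∪ S3 := by
    ext i
    simp only [Finset.mem_filter, Finset.mem_range, Finset.mem_union, Finset.mem_image, hS1, hS2,
      hS2']
    constructor
    · rintro ⟨hin, -, hik, hw⟩
      by_cases hc1 : i + k ≤ ℓ
      · exact Or.inl (Or.inl ⟨by omega, Nat.zero_le _, hc1, (wm_lower hc1).mp hw⟩)
      · by_cases hc2 : ℓ + 1 ≤ i
        · exact Or.inl (Or.inr ⟨i - ℓ - 1, ⟨by omega, Nat.zero_le _, by omega,
            (wm_upper hc2 hik).mp hw⟩, by omega⟩)
        · have hstr := wm_straddle (n := n) (ℓ := ℓ) (h := h) (α := α) (β := β)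
            hk0 hik (by omega) (by omega) hw
          rw [← hm] at hstr
          have hR : RealizesAtMax π σ := by
            rw [hrl]
            refine ⟨by omega, by omega, ?_⟩
            have : ℓ - m = i := by omega
            rw [this]; exact hw
          rw [hS3, if_pos hR]
          exact Or.inr (Finset.mem_singleton.mpr (by omega))
    · rintro ((⟨hiℓ, -, hik, hw⟩ | ⟨x, ⟨hx, -, hxk, hw⟩, hxi⟩) | hi3)
      · exact ⟨by omega, Nat.zero_le _, by omega, (wm_lower hik).mpr hw⟩
      · refine ⟨by omega, Nat.zero_le _, by omega, ?_⟩
        have hwx : WindowMatch π β (i - ℓ - 1) := by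
          have : i - ℓ - 1 = x := by omega
          rw [this]; exact hw
        exact (wm_upper (by omega) (by omega)).mpr hwx
      · rw [hS3] at hi3
        by_cases hR : RealizesAtMax π σ
        · rw [if_pos hR] at hi3
          simp only [Finset.mem_singleton] at hi3
          obtain ⟨h1, h2, h3⟩ := hrl.mp hR
          subst hi3
          exact ⟨by omega, Nat.zero_le _, h2, h3⟩
        · rw [if_neg hR] at hi3
          exact absurd hi3 (Finset.notMem_empty i)
  have hd12 : Disjoint S1 S2 := by
    rw [Finset.disjoint_left]
    intro x hx1 hx2
    simp only [hS1, hS2, hS2', Finset.mem_filter, Finset.mem_range, Finset.mem_image] at hx1 hx2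
    obtain ⟨y, hy, hyx⟩ := hx2
    omega
  have hd3 : Disjoint (S1 ∪ S2) S3 := by
    rw [Finset.disjoint_left]
    intro x hx1 hx3
    rw [hS3] at hx3
    by_cases hR : RealizesAtMax π σ
    · rw [if_pos hR] at hx3
      simp only [Finset.mem_singleton] at hx3
      obtain ⟨h1, h2, h3⟩ := hrl.mp hR
      simp only [hS1, hS2, hS2', Finset.mem_union, Finset.mem_filter, Finset.mem_range,
        Finset.mem_image] at hx1
      rcases hx1 with ⟨hiℓ, -, hik, -⟩ | ⟨y, ⟨hy, -, -, -⟩, hyx⟩ <;> omega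
    · rw [if_neg hR] at hx3
      exact absurd hx3 (Finset.notMem_empty x)
  have hcOcc : cOcc π σ = (S1 ∪ S2 ∪ S3).card := by
    rw [cOcc, cOccWin, hsplit]
  rw [hcOcc, Finset.card_union_of_disjoint hd3, Finset.card_union_of_disjoint hd12]
  have hc1 : S1.card = cOcc π α := rfl
  have hc2 : S2.card = cOcc π β := by
    rw [hS2, Finset.card_image_of_injective _ (add_left_injective (ℓ + 1)), hS2']
    rfl
  have hc3 : S3.card = if RealizesAtMax π σ then 1 else 0 := by
    rw [hS3]
    split_ifs <;> simp
  rw [hc1, hc2, hc3]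

end Windows

section Decomp

lemma card_filter_lt {n : ℕ} (t : Fin n) :
    (Finset.univ.filter fun x : Fin n => x < t).card = (t : ℕ) := by
  have : (Finset.univ.filter fun x : Fin n => x < t) = Finset.Iio t := by
    ext x; simp [Finset.mem_Iio]
  rw [this, Fin.card_Iio]

lemma card_filter_apply_lt {n : ℕ} (σ : Equiv.Perm (Fin n)) (j : Fin n) :
    (Finset.univ.filter fun x : Fin n => σ x < σ j).card = ((σ j : Fin n) : ℕ) := by
  have himg : (Finset.univ.filter fun x : Fin n => σ x < σ j)
      = (Finset.univ.filter fun y : Fin n => y < σ j).image σ.symm := by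
    ext x
    simp only [Finset.mem_filter, Finset.mem_univ, true_and, Finset.mem_image]
    constructor
    · intro hx; exact ⟨σ x, hx, Equiv.symm_apply_apply σ x⟩
    · rintro ⟨y, hy, rfl⟩
      rwa [Equiv.apply_symm_apply]
  rw [himg, Finset.card_image_of_injective _ σ.symm.injective, card_filter_lt]

lemma val_lt_max {n : ℕ} (σ : Equiv.Perm (Fin n)) {ℓ j : Fin n}
    (hmax : (σ ℓ : ℕ) = n - 1) (hj : j ≠ ℓ) : (σ j : ℕ) < n - 1 := by
  have h1 := (σ j).isLt
  have h2 : σ j ≠ σ ℓ := fun hh => hj (σ.injective hh)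
  rw [Ne, Fin.ext_iff, hmax] at h2
  omega

lemma before_max_lt {n : ℕ} (σ : Equiv.Perm (Fin n)) (hav : Avoids perm231 σ)
    {ℓ j : Fin n} (hmax : (σ ℓ : ℕ) = n - 1) (hj : j < ℓ) : (σ j : ℕ) < (ℓ : ℕ) := by
  have hjℓ : j ≠ ℓ := Fin.ne_of_lt hj
  have hsub : (Finset.univ.filter fun x : Fin n => σ x < σ j)
      ⊆ ((Finset.univ.filter fun x : Fin n => x < ℓ).erase j) := by
    intro x hx
    simp only [Finset.mem_filter, Finset.mem_univ, true_and] at hx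
    rw [Finset.mem_erase, Finset.mem_filter]
    have hxj : x ≠ j := by rintro rfl; exact absurd hx (lt_irrefl _)
    refine ⟨hxj, Finset.mem_univ _, ?_⟩
    by_contra hxℓ
    push_neg at hxℓ
    rcases eq_or_lt_of_le hxℓ with hx2 | hx2
    · -- x = ℓ
      have : σ x = σ ℓ := congrArg σ hx2.symm
      have h2 := val_lt_max σ hmax hjℓ
      rw [Fin.lt_def, this, hmax] at hx
      omega
    · -- ℓ < x
      refine hav (contains231_iff σ |>.mpr ⟨j, ℓ, x, hj, hx2, hx, ?_⟩)
      rw [Fin.lt_def, hmax]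
      exact val_lt_max σ hmax hjℓ
  have hcard := Finset.card_le_card hsub
  rw [card_filter_apply_lt] at hcard
  have hjmem : j ∈ Finset.univ.filter fun x : Fin n => x < ℓ := by
    simp [hj]
  rw [Finset.card_erase_of_mem hjmem, card_filter_lt] at hcard
  have hℓ0 : 0 < (ℓ : ℕ) := by
    rcases Nat.eq_zero_or_pos (ℓ : ℕ) with h0 | h0
    · exact absurd (Fin.lt_def.mp hj) (by omega)
    · exact h0
  omega

lemma after_max_ge {n : ℕ} (σ : Equiv.Perm (Fin n)) (hav : Avoids perm231 σ)
    {ℓ j : Fin n} (hmax : (σ ℓ : ℕ) = n - 1) (hj : ℓ < j) : (ℓ : ℕ) ≤ (σ j : ℕ) := by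
  have hsub : (Finset.univ.filter fun x : Fin n => x < ℓ)
      ⊆ (Finset.univ.filter fun x : Fin n => σ x < σ j) := by
    intro x hx
    simp only [Finset.mem_filter, Finset.mem_univ, true_and] at hx ⊢
    by_contra hc
    push_neg at hc
    have hxj : x ≠ j := Fin.ne_of_lt (hx.trans hj)
    have hne : σ x ≠ σ j := fun hh => hxj (σ.injective hh)
    have hc2 : σ j < σ x := lt_of_le_of_ne hc (Ne.symm hne)
    refine hav (contains231_iff σ |>.mpr ⟨x, ℓ, j, hx, hj, hc2, ?_⟩)
    rw [Fin.lt_def, hmax]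
    exact val_lt_max σ hmax (Fin.ne_of_lt hx)
  have hcard := Finset.card_le_card hsub
  rwa [card_filter_apply_lt, card_filter_lt] at hcard

/-- Totalized gluing. -/
def glueT (n ℓ : ℕ) (α : Equiv.Perm (Fin ℓ)) (β : Equiv.Perm (Fin (n - 1 - ℓ))) :
    Equiv.Perm (Fin n) :=
  if h : ℓ < n then glue n ℓ h α β else 1

set_option maxHeartbeats 1000000 in
lemma sum_glue {M : Type*} [AddCommMonoid M] (n : ℕ) (hn : 0 < n)
    (F : Equiv.Perm (Fin n) → M) :
    ∑ σ ∈ AvSet perm231 n, F σ =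
      ∑ x ∈ (Finset.range n).sigma
          (fun ℓ => AvSet perm231 ℓ ×ˢ AvSet perm231 (n - 1 - ℓ)),
        F (glueT n x.1 x.2.1 x.2.2) := by
  refine (Finset.sum_bij (fun x _ => glueT n x.1 x.2.1 x.2.2) ?_ ?_ ?_ ?_).symm
  · -- maps into AvSet
    rintro ⟨ℓ, α, β⟩ hx
    simp only [Finset.mem_sigma, Finset.mem_range, Finset.mem_product] at hx
    obtain ⟨hℓ, hα, hβ⟩ := hx
    simp only [AvSet, Finset.mem_filter, Finset.mem_univ, true_and] at hα hβ ⊢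
    rw [glueT, dif_pos hℓ]
    exact (avoids_glue_iff).mpr ⟨hα, hβ⟩
  · -- injective
    rintro ⟨ℓ₁, α₁, β₁⟩ hx₁ ⟨ℓ₂, α₂, β₂⟩ hx₂ heq
    simp only [Finset.mem_sigma, Finset.mem_range, Finset.mem_product] at hx₁ hx₂
    obtain ⟨hℓ₁, -, -⟩ := hx₁
    obtain ⟨hℓ₂, -, -⟩ := hx₂
    simp only [glueT, dif_pos hℓ₁, dif_pos hℓ₂] at heq
    have hn1 : n - 1 < n := by omega
    have hℓeq : ℓ₁ = ℓ₂ := by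
      have h1 := glue_symm_max (n := n) (ℓ := ℓ₁) (h := hℓ₁) (α := α₁) (β := β₁) hn1
      have h2 := glue_symm_max (n := n) (ℓ := ℓ₂) (h := hℓ₂) (α := α₂) (β := β₂) hn1
      rw [heq] at h1
      rw [h2] at h1
      exact h1.symm
    subst hℓeq
    have hαeq : α₁ = α₂ := by
      apply Equiv.ext
      intro x
      apply Fin.ext
      have hv1 := glueF_val_lt (n := n) (h := hℓ₁) (α := α₁) (β := β₁)
        (j := ⟨(x : ℕ), lt_trans x.isLt hℓ₁⟩) x.isLt
      have hv2 := glueF_val_lt (n := n) (h := hℓ₁) (α := α₂) (β := β₂)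
        (j := ⟨(x : ℕ), lt_trans x.isLt hℓ₁⟩) x.isLt
      have := congrArg (fun (τ : Equiv.Perm (Fin n)) => ((τ ⟨(x : ℕ), lt_trans x.isLt hℓ₁⟩ : Fin n) : ℕ)) heq
      simp only [glue_apply] at this
      rw [hv1, hv2] at this
      simpa using this
    have hβeq : β₁ = β₂ := by
      apply Equiv.ext
      intro x
      apply Fin.ext
      have hb : ℓ₁ + 1 + (x : ℕ) < n := by have := x.isLt; omega
      have hgt : ℓ₁ < ((⟨ℓ₁ + 1 + (x : ℕ), hb⟩ : Fin n) : ℕ) := by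
        show ℓ₁ < ℓ₁ + 1 + (x : ℕ); omega
      have hs : ((⟨ℓ₁ + 1 + (x : ℕ), hb⟩ : Fin n) : ℕ) - ℓ₁ - 1 < n - 1 - ℓ₁ := by
        have := x.isLt
        show ℓ₁ + 1 + (x : ℕ) - ℓ₁ - 1 < n - 1 - ℓ₁; omega
      have hv1 := glueF_val_gt (n := n) (h := hℓ₁) (α := α₁) (β := β₁) hgt hs
      have hv2 := glueF_val_gt (n := n) (h := hℓ₁) (α := α₂) (β := β₂) hgt hs
      have := congrArg (fun (τ : Equiv.Perm (Fin n)) => ((τ ⟨ℓ₁ + 1 + (x : ℕ), hb⟩ : Fin n) : ℕ)) heq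
      simp only [glue_apply] at this
      rw [hv1, hv2] at this
      have hxx : (⟨((⟨ℓ₁ + 1 + (x : ℕ), hb⟩ : Fin n) : ℕ) - ℓ₁ - 1, hs⟩ : Fin (n - 1 - ℓ₁)) = x :=
        Fin.ext (by show ℓ₁ + 1 + (x : ℕ) - ℓ₁ - 1 = (x : ℕ); omega)
      rw [hxx] at this
      omega
    rw [hαeq, hβeq]
  · -- surjective
    intro σ hσ
    simp only [AvSet, Finset.mem_filter, Finset.mem_univ, true_and] at hσ
    have hn1 : n - 1 < n := by omega
    set ℓF : Fin n := σ⁻¹ ⟨n - 1, hn1⟩ with hℓF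
    set ℓ : ℕ := (ℓF : ℕ) with hℓ
    have hℓn : ℓ < n := ℓF.isLt
    have hmax : (σ ℓF : ℕ) = n - 1 := by
      rw [hℓF]; exact congrArg Fin.val (Equiv.apply_symm_apply σ _)
    have hlow : ∀ x : Fin ℓ, (σ ⟨(x : ℕ), lt_trans x.isLt hℓn⟩ : ℕ) < ℓ := by
      intro x
      exact before_max_lt σ hσ hmax (show (⟨(x : ℕ), _⟩ : Fin n) < ℓF from x.isLt)
    have hhigh : ∀ x : Fin (n - 1 - ℓ),
        (ℓ ≤ (σ ⟨ℓ + 1 + (x : ℕ), by have := x.isLt; omega⟩ : ℕ)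
          ∧ (σ ⟨ℓ + 1 + (x : ℕ), by have := x.isLt; omega⟩ : ℕ) < n - 1) := by
      intro x
      constructor
      · refine after_max_ge σ hσ hmax ?_
        rw [Fin.lt_def]
        show ℓ < ℓ + 1 + (x : ℕ); omega
      · refine val_lt_max σ hmax ?_
        rw [Ne, Fin.ext_iff]
        show ¬(ℓ + 1 + (x : ℕ) = ℓ); omega
    set αf : Fin ℓ → Fin ℓ := fun x => ⟨(σ ⟨(x : ℕ), lt_trans x.isLt hℓn⟩ : ℕ), hlow x⟩ with hαf
    have hαinj : Function.Injective αf := by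
      intro x y hxy
      rw [hαf] at hxy
      simp only [Fin.mk.injEq] at hxy
      have := σ.injective (Fin.ext hxy)
      simp only [Fin.mk.injEq] at this
      exact Fin.ext this
    set α : Equiv.Perm (Fin ℓ) :=
      Equiv.ofBijective αf (Finite.injective_iff_bijective.mp hαinj) with hα
    set βf : Fin (n - 1 - ℓ) → Fin (n - 1 - ℓ) := fun x =>
      ⟨(σ ⟨ℓ + 1 + (x : ℕ), by have := x.isLt; omega⟩ : ℕ) - ℓ,
        by have := hhigh x; omega⟩ with hβf
    have hβinj : Function.Injective βf := by
      intro x y hxy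
      rw [hβf] at hxy
      simp only [Fin.mk.injEq] at hxy
      have h1 := (hhigh x).1
      have h2 := (hhigh y).1
      have hval : (σ ⟨ℓ + 1 + (x : ℕ), by have := x.isLt; omega⟩ : ℕ)
          = (σ ⟨ℓ + 1 + (y : ℕ), by have := y.isLt; omega⟩ : ℕ) := by omega
      have := σ.injective (Fin.ext hval)
      simp only [Fin.mk.injEq] at this
      exact Fin.ext (by omega)
    set β : Equiv.Perm (Fin (n - 1 - ℓ)) :=
      Equiv.ofBijective βf (Finite.injective_iff_bijective.mp hβinj) with hβ
    have hglue : glueT n ℓ α β = σ := by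
      rw [glueT, dif_pos hℓn]
      apply Equiv.ext
      intro j
      apply Fin.ext
      rw [glue_apply]
      rcases Nat.lt_trichotomy (j : ℕ) ℓ with hj | hj | hj
      · rw [glueF_val_lt hj]
        have : (α ⟨(j : ℕ), hj⟩ : ℕ) = (σ ⟨(j : ℕ), lt_trans hj hℓn⟩ : ℕ) := rfl
        rw [this]
      · rw [glueF_val_eq hj]
        have : j = ℓF := Fin.ext hj
        rw [this, hmax]
      · have hj2 : (j : ℕ) - ℓ - 1 < n - 1 - ℓ := by have := j.isLt; omega
        rw [glueF_val_gt hj hj2]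
        have hβv : (β ⟨(j : ℕ) - ℓ - 1, hj2⟩ : ℕ)
            = (σ ⟨ℓ + 1 + ((j : ℕ) - ℓ - 1), by omega⟩ : ℕ) - ℓ := rfl
        rw [hβv]
        have hpos : (⟨ℓ + 1 + ((j : ℕ) - ℓ - 1), by omega⟩ : Fin n) = j :=
          Fin.ext (by show ℓ + 1 + ((j : ℕ) - ℓ - 1) = (j : ℕ); omega)
        rw [hpos]
        have hge : ℓ ≤ (σ j : ℕ) := by
          have := (hhigh ⟨(j : ℕ) - ℓ - 1, hj2⟩).1
          rw [show (⟨ℓ + 1 + ((j : ℕ) - ℓ - 1 : ℕ), _⟩ : Fin n) = j from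
            Fin.ext (by show ℓ + 1 + ((j : ℕ) - ℓ - 1) = (j : ℕ); omega)] at this
          exact this
        omega
    have havg : Avoids perm231 (glue n ℓ hℓn α β) := by
      have : glue n ℓ hℓn α β = σ := by rw [← hglue, glueT, dif_pos hℓn]
      rw [this]; exact hσ
    obtain ⟨hαav, hβav⟩ := (avoids_glue_iff).mp havg
    refine ⟨⟨ℓ, α, β⟩, ?_, hglue⟩
    simp only [Finset.mem_sigma, Finset.mem_range, Finset.mem_product, AvSet,
      Finset.mem_filter, Finset.mem_univ, true_and]
    exact ⟨hℓn, hαav, hβav⟩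
  · intro x hx
    rfl

end Decomp

section Counting

variable {k : ℕ}

def eSeq (n : ℕ) : ℕ := (AvSet perm231 n).card

def uSeq (π : Equiv.Perm (Fin k)) (n : ℕ) : ℕ := ∑ σ ∈ AvSet perm231 n, cOcc π σ

def vSeq (π : Equiv.Perm (Fin k)) (n : ℕ) : ℕ :=
  ∑ σ ∈ AvSet perm231 n, (if RealizesAtMax π σ then 1 else 0)

lemma avoids_of_size_lt {n : ℕ} (σ : Equiv.Perm (Fin n)) (hn : n < 3) : Avoids perm231 σ := by
  rintro ⟨f, hmono, -⟩
  have h := Fintype.card_le_of_injective f hmono.injective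
  simp only [Fintype.card_fin] at h
  omega

lemma eSeq_zero : eSeq 0 = 1 := by
  unfold eSeq AvSet
  rw [Finset.filter_true_of_mem (fun σ _ => avoids_of_size_lt σ (by norm_num))]
  simp [Finset.card_univ, Fintype.card_perm]

lemma cOcc_size_zero (π : Equiv.Perm (Fin k)) (σ : Equiv.Perm (Fin 0)) : cOcc π σ = 0 := by
  simp [cOcc, cOccWin]

lemma not_realizes_size_zero (π : Equiv.Perm (Fin k)) (σ : Equiv.Perm (Fin 0)) :
    ¬ RealizesAtMax π σ := by
  rintro ⟨-, hn, -⟩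
  exact absurd hn (lt_irrefl 0)

lemma uSeq_zero (π : Equiv.Perm (Fin k)) : uSeq π 0 = 0 := by
  unfold uSeq
  exact Finset.sum_eq_zero fun σ _ => cOcc_size_zero π σ

lemma vSeq_zero (π : Equiv.Perm (Fin k)) : vSeq π 0 = 0 := by
  unfold vSeq
  exact Finset.sum_eq_zero fun σ _ => if_neg (not_realizes_size_zero π σ)

lemma cOcc_le (π : Equiv.Perm (Fin k)) {n : ℕ} (σ : Equiv.Perm (Fin n)) : cOcc π σ ≤ n := by
  calc cOcc π σ ≤ (Finset.range n).card := by unfold cOcc cOccWin; exact Finset.card_filter_le _ _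
  _ = n := Finset.card_range n

lemma vSeq_le (π : Equiv.Perm (Fin k)) (n : ℕ) : vSeq π n ≤ eSeq n := by
  unfold vSeq eSeq
  calc ∑ σ ∈ AvSet perm231 n, (if RealizesAtMax π σ then 1 else 0)
      ≤ ∑ σ ∈ AvSet perm231 n, 1 :=
        Finset.sum_le_sum (fun σ _ => by split_ifs <;> omega)
  _ = (AvSet perm231 n).card := by rw [Finset.card_eq_sum_ones]

lemma uSeq_le (π : Equiv.Perm (Fin k)) (n : ℕ) : uSeq π n ≤ n * eSeq n := by
  unfold uSeq eSeq
  calc ∑ σ ∈ AvSet perm231 n, cOcc π σ ≤ ∑ _σ ∈ AvSet perm231 n, n :=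
    Finset.sum_le_sum (fun σ _ => cOcc_le π σ)
  _ = (AvSet perm231 n).card * n := by rw [Finset.sum_const, smul_eq_mul]
  _ = n * (AvSet perm231 n).card := Nat.mul_comm _ _

lemma eSeq_succ (n : ℕ) :
    eSeq (n + 1) = ∑ i ∈ Finset.range (n + 1), eSeq i * eSeq (n - i) := by
  unfold eSeq
  rw [Finset.card_eq_sum_ones, sum_glue (n + 1) (Nat.succ_pos n) (fun _ => 1),
    Finset.sum_sigma]
  refine Finset.sum_congr rfl ?_
  intro ℓ hℓ
  rw [← Finset.card_eq_sum_ones, Finset.card_product]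
  rfl

lemma uSeq_succ (π : Equiv.Perm (Fin k)) (hk0 : 0 < k) (n : ℕ) :
    uSeq π (n + 1) =
      (∑ i ∈ Finset.range (n + 1), (uSeq π i * eSeq (n - i) + eSeq i * uSeq π (n - i)))
        + vSeq π (n + 1) := by
  unfold uSeq
  rw [sum_glue (n + 1) (Nat.succ_pos n) (fun σ => cOcc π σ), Finset.sum_sigma]
  have hv : vSeq π (n + 1) = ∑ ℓ ∈ Finset.range (n + 1),
      ∑ x ∈ AvSet perm231 ℓ ×ˢ AvSet perm231 (n + 1 - 1 - ℓ),
        (if RealizesAtMax π (glueT (n + 1) ℓ x.1 x.2) then 1 else 0) := by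
    unfold vSeq
    rw [sum_glue (n + 1) (Nat.succ_pos n)
      (fun σ => if RealizesAtMax π σ then 1 else 0), Finset.sum_sigma]
  rw [hv, ← Finset.sum_add_distrib]
  refine Finset.sum_congr rfl ?_
  intro ℓ hℓ
  rw [Finset.mem_range] at hℓ
  have hℓn : ℓ < n + 1 := hℓ
  have hgl : ∀ x ∈ AvSet perm231 ℓ ×ˢ AvSet perm231 (n + 1 - 1 - ℓ),
      cOcc π (glueT (n + 1) ℓ x.1 x.2)
        = cOcc π x.1 + cOcc π x.2
          + (if RealizesAtMax π (glueT (n + 1) ℓ x.1 x.2) then 1 else 0) := by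
    intro x hx
    have hd : glueT (n + 1) ℓ x.1 x.2 = glue (n + 1) ℓ hℓn x.1 x.2 := dif_pos hℓn
    rw [hd]
    exact cOcc_glue hk0
  rw [Finset.sum_congr rfl hgl, Finset.sum_add_distrib, Finset.sum_add_distrib]
  congr 1
  congr 1
  · rw [Finset.sum_product]
    have : ∀ α ∈ AvSet perm231 ℓ,
        (∑ _β ∈ AvSet perm231 (n + 1 - 1 - ℓ), cOcc π α)
          = cOcc π α * eSeq (n - ℓ) := by
      intro α _
      rw [Finset.sum_const, smul_eq_mul, Nat.mul_comm]
      rfl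
    rw [Finset.sum_congr rfl this, ← Finset.sum_mul]
  · rw [Finset.sum_product]
    have : ∀ α ∈ AvSet perm231 ℓ,
        (∑ β ∈ AvSet perm231 (n + 1 - 1 - ℓ), cOcc π β) = uSeq π (n - ℓ) := fun α _ => rfl
    rw [Finset.sum_congr rfl this, Finset.sum_const, smul_eq_mul]
    rfl

lemma vSeq_eq_card (π : Equiv.Perm (Fin k)) (n : ℕ) :
    vSeq π n = ((AvSet perm231 n).filter (fun σ => RealizesAtMax π σ)).card := by
  unfold vSeq
  rw [Finset.card_eq_sum_ones, Finset.sum_filter]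

lemma eSeq_eq_catalan (n : ℕ) : eSeq n = catalan n := by
  induction n using Nat.strong_induction_on with
  | _ n ih =>
    match n with
    | 0 => rw [eSeq_zero, catalan_zero]
    | (m + 1) =>
      rw [eSeq_succ, catalan_succ',
        Nat.sum_antidiagonal_eq_sum_range_succ (fun x y => catalan x * catalan y)]
      refine Finset.sum_congr rfl fun i hi => ?_
      rw [Finset.mem_range] at hi
      rw [ih i (by omega), ih (m - i) (by omega)]

lemma catalan_le_four_pow (n : ℕ) : catalan n ≤ 4 ^ n := by
  have h1 : (n + 1) * catalan n = Nat.centralBinom n := succ_mul_catalan_eq_centralBinom n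
  have h2 : Nat.centralBinom n ≤ 4 ^ n := by
    rw [Nat.centralBinom]
    calc (2 * n).choose n ≤ ∑ i ∈ Finset.range (2 * n + 1), (2 * n).choose i :=
        Finset.single_le_sum (fun i _ => Nat.zero_le _)
          (Finset.mem_range.mpr (by omega))
    _ = 2 ^ (2 * n) := Nat.sum_range_choose (2 * n)
    _ = 4 ^ n := by rw [pow_mul]; norm_num
  calc catalan n ≤ (n + 1) * catalan n := Nat.le_mul_of_pos_left _ (by omega)
  _ = Nat.centralBinom n := h1
  _ ≤ 4 ^ n := h2

lemma eSeq_le_four_pow (n : ℕ) : eSeq n ≤ 4 ^ n := by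
  rw [eSeq_eq_catalan]; exact catalan_le_four_pow n

end Counting

section Analysis

lemma conv_partial_le {f : ℕ → ℝ} (hf : ∀ n, 0 ≤ f n) (N : ℕ) :
    ∑ n ∈ Finset.range N, ∑ i ∈ Finset.range (n + 1), f i * f (n - i)
      ≤ (∑ i ∈ Finset.range N, f i) * ∑ i ∈ Finset.range N, f i := by
  rw [Finset.sum_mul_sum, Finset.sum_sigma' (Finset.range N) (fun n => Finset.range (n + 1))
    (fun n i => f i * f (n - i))]
  have h1 : ∑ x ∈ (Finset.range N).sigma (fun n => Finset.range (n + 1)),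
        f x.snd * f (x.fst - x.snd)
      = ∑ y ∈ (Finset.range N ×ˢ Finset.range N).filter (fun y => y.1 + y.2 < N),
          f y.1 * f y.2 := by
    refine Finset.sum_bij (fun x _ => (x.snd, x.fst - x.snd)) ?_ ?_ ?_ ?_
    · rintro ⟨n, i⟩ hx
      simp only [Finset.mem_sigma, Finset.mem_range] at hx
      simp only [Finset.mem_filter, Finset.mem_product, Finset.mem_range]
      omega
    · rintro ⟨n, i⟩ hx ⟨n', i'⟩ hx' heq
      simp only [Finset.mem_sigma, Finset.mem_range] at hx hx'
      simp only [Prod.mk.injEq] at heq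
      obtain ⟨h1, h2⟩ := heq
      obtain rfl : n = n' := by omega
      obtain rfl : i = i' := h1
      rfl
    · rintro ⟨i, j⟩ hy
      simp only [Finset.mem_filter, Finset.mem_product, Finset.mem_range] at hy
      refine ⟨⟨i + j, i⟩, ?_, ?_⟩
      · simp only [Finset.mem_sigma, Finset.mem_range]; omega
      · simp only [Prod.mk.injEq]
        exact ⟨trivial, by omega⟩
    · rintro ⟨n, i⟩ hx; rfl
  rw [h1, ← Finset.sum_product']
  refine Finset.sum_le_sum_of_subset_of_nonneg (Finset.filter_subset _ _) ?_
  intro y _ _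
  exact mul_nonneg (hf _) (hf _)

variable {k : ℕ}

def dR (p q : ℝ) (n : ℕ) : ℝ := (eSeq n : ℝ) * p ^ n * q ^ (n + 1)

def cR (π : Equiv.Perm (Fin k)) (p q : ℝ) (n : ℕ) : ℝ :=
  (uSeq π n : ℝ) * p ^ n * q ^ (n + 1)

def bR (π : Equiv.Perm (Fin k)) (p q : ℝ) (n : ℕ) : ℝ :=
  (vSeq π n : ℝ) * p ^ n * q ^ (n + 1)

lemma dR_rec (p q : ℝ) (n : ℕ) :
    dR p q (n + 1) = p * ∑ i ∈ Finset.range (n + 1), dR p q i * dR p q (n - i) := by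
  unfold dR
  rw [eSeq_succ]
  push_cast
  rw [Finset.sum_mul, Finset.sum_mul, Finset.mul_sum]
  refine Finset.sum_congr rfl fun i hi => ?_
  rw [Finset.mem_range] at hi
  have hp1 : p ^ i * p ^ (n - i) = p ^ n := by rw [← pow_add]; congr 1; omega
  have hq1 : q ^ (i + 1) * q ^ (n - i + 1) = q ^ (n + 1 + 1) := by rw [← pow_add]; congr 1; omega
  calc (eSeq i : ℝ) * (eSeq (n - i) : ℝ) * p ^ (n + 1) * q ^ (n + 1 + 1)
      = ((eSeq i : ℝ) * (eSeq (n - i) : ℝ)) * (p * (p ^ i * p ^ (n - i)))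
          * (q ^ (i + 1) * q ^ (n - i + 1)) := by rw [hp1, hq1]; ring
  _ = p * ((eSeq i : ℝ) * p ^ i * q ^ (i + 1)
        * ((eSeq (n - i) : ℝ) * p ^ (n - i) * q ^ (n - i + 1))) := by ring

lemma cR_rec (π : Equiv.Perm (Fin k)) (hk0 : 0 < k) (p q : ℝ) (n : ℕ) :
    cR π p q (n + 1) =
      p * ((∑ i ∈ Finset.range (n + 1), cR π p q i * dR p q (n - i))
        + (∑ i ∈ Finset.range (n + 1), dR p q i * cR π p q (n - i)))
      + bR π p q (n + 1) := by
  unfold cR dR bR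
  rw [uSeq_succ π hk0]
  push_cast
  rw [Finset.sum_add_distrib, add_mul, add_mul]
  congr 1
  rw [add_mul, add_mul, mul_add]
  congr 1
  all_goals rw [Finset.sum_mul, Finset.sum_mul, Finset.mul_sum]
  · refine Finset.sum_congr rfl fun i hi => ?_
    rw [Finset.mem_range] at hi
    have hp1 : p ^ i * p ^ (n - i) = p ^ n := by rw [← pow_add]; congr 1; omega
    have hq1 : q ^ (i + 1) * q ^ (n - i + 1) = q ^ (n + 1 + 1) := by
      rw [← pow_add]; congr 1; omega
    calc (uSeq π i : ℝ) * (eSeq (n - i) : ℝ) * p ^ (n + 1) * q ^ (n + 1 + 1)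
        = ((uSeq π i : ℝ) * (eSeq (n - i) : ℝ)) * (p * (p ^ i * p ^ (n - i)))
            * (q ^ (i + 1) * q ^ (n - i + 1)) := by rw [hp1, hq1]; ring
    _ = p * ((uSeq π i : ℝ) * p ^ i * q ^ (i + 1)
          * ((eSeq (n - i) : ℝ) * p ^ (n - i) * q ^ (n - i + 1))) := by ring
  · refine Finset.sum_congr rfl fun i hi => ?_
    rw [Finset.mem_range] at hi
    have hp1 : p ^ i * p ^ (n - i) = p ^ n := by rw [← pow_add]; congr 1; omega
    have hq1 : q ^ (i + 1) * q ^ (n - i + 1) = q ^ (n + 1 + 1) := by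
      rw [← pow_add]; congr 1; omega
    calc (eSeq i : ℝ) * (uSeq π (n - i) : ℝ) * p ^ (n + 1) * q ^ (n + 1 + 1)
        = ((eSeq i : ℝ) * (uSeq π (n - i) : ℝ)) * (p * (p ^ i * p ^ (n - i)))
            * (q ^ (i + 1) * q ^ (n - i + 1)) := by rw [hp1, hq1]; ring
    _ = p * ((eSeq i : ℝ) * p ^ i * q ^ (i + 1)
          * ((uSeq π (n - i) : ℝ) * p ^ (n - i) * q ^ (n - i + 1))) := by ring

lemma summable_norm_of_nonneg {f : ℕ → ℝ} (h0 : ∀ n, 0 ≤ f n) (hs : Summable f) :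
    Summable fun n => ‖f n‖ :=
  hs.congr fun n => (Real.norm_of_nonneg (h0 n)).symm

theorem main_aux (hk : 1 ≤ k) (π : Equiv.Perm (Fin k)) (p q δ : ℝ)
    (hp0 : 0 < p) (hq : q = 1 - p) (hδ : δ = 1 - 2 * p) (hδpos : 0 < δ) :
    Summable (fun n : ℕ => p ^ (n - 1) * q ^ (n + 1) * (uSeq π n : ℝ))
    ∧ δ * (∑' n : ℕ, p ^ (n - 1) * q ^ (n + 1) * (uSeq π n : ℝ))
      = ∑' n : ℕ, p ^ (n - 1) * q ^ (n + 1) * (vSeq π n : ℝ) := by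
  have hp2 : p < 1 / 2 := by nlinarith
  have hq0 : 0 < q := by rw [hq]; nlinarith
  have hq1 : q < 1 := by rw [hq]; nlinarith
  set x : ℝ := 4 * p * q with hx
  have hx0 : 0 ≤ x := by positivity
  have hx1 : x < 1 := by rw [hx, hq]; nlinarith [sq_nonneg (1 - 2 * p)]
  -- nonnegativity
  have hd0 : ∀ n, 0 ≤ dR p q n := fun n => by
    unfold dR; positivity
  have hc0 : ∀ n, 0 ≤ cR π p q n := fun n => by
    unfold cR; positivity
  have hb0 : ∀ n, 0 ≤ bR π p q n := fun n => by
    unfold bR; positivity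
  -- bounds
  have hxpow : ∀ n : ℕ, (4 : ℝ) ^ n * p ^ n * q ^ n = x ^ n := by
    intro n; rw [hx, mul_pow, mul_pow]
  have hdle : ∀ n, dR p q n ≤ q * x ^ n := by
    intro n
    unfold dR
    have he : (eSeq n : ℝ) ≤ (4 : ℝ) ^ n := by
      have := eSeq_le_four_pow n
      calc (eSeq n : ℝ) ≤ ((4 ^ n : ℕ) : ℝ) := by exact_mod_cast this
      _ = (4 : ℝ) ^ n := by push_cast; ring
    calc (eSeq n : ℝ) * p ^ n * q ^ (n + 1) ≤ (4 : ℝ) ^ n * p ^ n * q ^ (n + 1) := by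
          have hpq : (0:ℝ) ≤ p ^ n * q ^ (n+1) := by positivity
          calc (eSeq n : ℝ) * p ^ n * q ^ (n + 1) = (eSeq n : ℝ) * (p ^ n * q ^ (n+1)) := by ring
          _ ≤ (4:ℝ) ^ n * (p ^ n * q ^ (n+1)) := mul_le_mul_of_nonneg_right he hpq
          _ = (4:ℝ) ^ n * p ^ n * q ^ (n + 1) := by ring
    _ = q * x ^ n := by rw [← hxpow n, pow_succ]; ring
  have hcle : ∀ n, cR π p q n ≤ q * ((n : ℝ) * x ^ n) := by
    intro n
    unfold cR
    have hu : (uSeq π n : ℝ) ≤ (n : ℝ) * (4 : ℝ) ^ n := by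
      have h1 := uSeq_le π n
      have h2 := eSeq_le_four_pow n
      have h3 : uSeq π n ≤ n * 4 ^ n := le_trans h1 (Nat.mul_le_mul_left n h2)
      calc (uSeq π n : ℝ) ≤ ((n * 4 ^ n : ℕ) : ℝ) := by exact_mod_cast h3
      _ = (n : ℝ) * (4 : ℝ) ^ n := by push_cast; ring
    have hpq : (0:ℝ) ≤ p ^ n * q ^ (n+1) := by positivity
    calc (uSeq π n : ℝ) * p ^ n * q ^ (n + 1) = (uSeq π n : ℝ) * (p ^ n * q ^ (n+1)) := by ring
    _ ≤ ((n : ℝ) * (4:ℝ) ^ n) * (p ^ n * q ^ (n+1)) := mul_le_mul_of_nonneg_right hu hpq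
    _ = q * ((n : ℝ) * ((4:ℝ) ^ n * p ^ n * q ^ n)) := by rw [pow_succ]; ring
    _ = q * ((n : ℝ) * x ^ n) := by rw [hxpow n]
  have hble : ∀ n, bR π p q n ≤ dR p q n := by
    intro n
    unfold bR dR
    have hv : (vSeq π n : ℝ) ≤ (eSeq n : ℝ) := by exact_mod_cast vSeq_le π n
    have hpq : (0:ℝ) ≤ p ^ n * q ^ (n+1) := by positivity
    calc (vSeq π n : ℝ) * p ^ n * q ^ (n + 1) = (vSeq π n : ℝ) * (p ^ n * q ^ (n+1)) := by ring
    _ ≤ (eSeq n : ℝ) * (p ^ n * q ^ (n+1)) := mul_le_mul_of_nonneg_right hv hpq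
    _ = (eSeq n : ℝ) * p ^ n * q ^ (n+1) := by ring
  -- summability
  have hsd : Summable (dR p q) :=
    Summable.of_nonneg_of_le hd0 hdle ((summable_geometric_of_lt_one hx0 hx1).mul_left q)
  have hsnx : Summable (fun n : ℕ => q * ((n : ℝ) * x ^ n)) := by
    have h := summable_pow_mul_geometric_of_norm_lt_one 1
      (r := x) (by rw [Real.norm_of_nonneg hx0]; exact hx1)
    exact (h.congr (fun n => by rw [pow_one])).mul_left q
  have hsc : Summable (cR π p q) := Summable.of_nonneg_of_le hc0 hcle hsnx
  have hsb : Summable (bR π p q) := Summable.of_nonneg_of_le hb0 hble hsd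
  have hnd := summable_norm_of_nonneg hd0 hsd
  have hnc := summable_norm_of_nonneg hc0 hsc
  -- D = 1
  set D : ℝ := ∑' n, dR p q n with hD
  have hd_zero : dR p q 0 = q := by
    unfold dR; rw [eSeq_zero]; push_cast; ring
  have hDle : D ≤ 1 := by
    refine hsd.tsum_le_of_sum_range_le ?_
    intro N
    induction N with
    | zero => simp
    | succ N ih =>
      rw [Finset.sum_range_succ']
      have h1 : ∑ i ∈ Finset.range N, dR p q (i + 1)
          = p * ∑ n ∈ Finset.range N, ∑ i ∈ Finset.range (n + 1), dR p q i * dR p q (n - i) := by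
        rw [Finset.mul_sum]
        exact Finset.sum_congr rfl fun n _ => dR_rec p q n
      have h2 : ∑ n ∈ Finset.range N, ∑ i ∈ Finset.range (n + 1), dR p q i * dR p q (n - i)
          ≤ (∑ i ∈ Finset.range N, dR p q i) * ∑ i ∈ Finset.range N, dR p q i :=
        conv_partial_le hd0 N
      have h3 : (∑ i ∈ Finset.range N, dR p q i) * (∑ i ∈ Finset.range N, dR p q i) ≤ 1 := by
        have hnn : 0 ≤ ∑ i ∈ Finset.range N, dR p q i := Finset.sum_nonneg fun i _ => hd0 i
        nlinarith
      have h4 : ∑ i ∈ Finset.range N, dR p q (i + 1) ≤ p := by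
        rw [h1]
        calc p * ∑ n ∈ Finset.range N, ∑ i ∈ Finset.range (n + 1), dR p q i * dR p q (n - i)
            ≤ p * 1 := by
              refine mul_le_mul_of_nonneg_left (le_trans h2 h3) (le_of_lt hp0)
        _ = p := mul_one p
      rw [hd_zero]
      linarith
  have hDeq : D = q + p * (D * D) := by
    have e1 : D = dR p q 0 + ∑' n, dR p q (n + 1) := by
      rw [hD]; exact hsd.tsum_eq_zero_add
    rw [hd_zero] at e1
    have h1 : ∀ n : ℕ, dR p q (n + 1)
        = p * ∑ i ∈ Finset.range (n + 1), dR p q i * dR p q (n - i) := dR_rec p q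
    have e2 : ∑' n : ℕ, dR p q (n + 1) = p * (D * D) := by
      rw [tsum_congr h1, tsum_mul_left, hD]
      congr 1
      exact (tsum_mul_tsum_eq_tsum_sum_range_of_summable_norm hnd hnd).symm
    rw [e2] at e1
    exact e1
  have hqgtp : p < q := by rw [hq]; nlinarith
  have hDone : D = 1 := by
    have hfac : (D - 1) * (p * D - q) = 0 := by nlinarith [hDeq, hq]
    rcases mul_eq_zero.mp hfac with h | h
    · linarith
    · exfalso
      have : p * D ≤ p := by
        calc p * D ≤ p * 1 := mul_le_mul_of_nonneg_left hDle (le_of_lt hp0)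
        _ = p := mul_one p
      linarith
  -- C equation
  set C : ℝ := ∑' n, cR π p q n with hC
  set B : ℝ := ∑' n, bR π p q n with hB
  have hc_zero : cR π p q 0 = 0 := by
    unfold cR; rw [uSeq_zero]; push_cast; ring
  have hb_zero : bR π p q 0 = 0 := by
    unfold bR; rw [vSeq_zero]; push_cast; ring
  have hs1 : Summable (fun n : ℕ =>
      ∑ i ∈ Finset.range (n + 1), cR π p q i * dR p q (n - i)) :=
    (summable_norm_sum_mul_range_of_summable_norm hnc hnd).of_norm
  have hs2 : Summable (fun n : ℕ =>
      ∑ i ∈ Finset.range (n + 1), dR p q i * cR π p q (n - i)) :=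
    (summable_norm_sum_mul_range_of_summable_norm hnd hnc).of_norm
  have hsbsucc : Summable (fun n : ℕ => bR π p q (n + 1)) :=
    (summable_nat_add_iff 1).mpr hsb
  have hCeq : C = p * (C * D + D * C) + B := by
    have h0 : C = cR π p q 0 + ∑' n, cR π p q (n + 1) := hsc.tsum_eq_zero_add
    rw [hc_zero, zero_add] at h0
    have h1 : ∀ n : ℕ, cR π p q (n + 1) =
        p * ((∑ i ∈ Finset.range (n + 1), cR π p q i * dR p q (n - i))
          + (∑ i ∈ Finset.range (n + 1), dR p q i * cR π p q (n - i)))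
        + bR π p q (n + 1) := cR_rec π (by omega) p q
    rw [tsum_congr h1] at h0
    rw [Summable.tsum_add (((hs1.add hs2).mul_left p)) hsbsucc] at h0
    rw [tsum_mul_left, Summable.tsum_add hs1 hs2] at h0
    have h2 : ∑' n : ℕ, (∑ i ∈ Finset.range (n + 1), cR π p q i * dR p q (n - i)) = C * D :=
      (tsum_mul_tsum_eq_tsum_sum_range_of_summable_norm hnc hnd).symm
    have h3 : ∑' n : ℕ, (∑ i ∈ Finset.range (n + 1), dR p q i * cR π p q (n - i)) = D * C :=
      (tsum_mul_tsum_eq_tsum_sum_range_of_summable_norm hnd hnc).symm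
    have h4 : ∑' n : ℕ, bR π p q (n + 1) = B := by
      have := hsb.tsum_eq_zero_add
      rw [hb_zero, zero_add] at this
      exact this.symm
    rw [h2, h3, h4] at h0
    exact h0
  have hδC : δ * C = B := by
    rw [hDone] at hCeq
    rw [hδ]
    linear_combination hCeq
  -- relate to the target sequences
  set aT : ℕ → ℝ := fun n => p ^ (n - 1) * q ^ (n + 1) * (uSeq π n : ℝ) with haT
  set bT : ℕ → ℝ := fun n => p ^ (n - 1) * q ^ (n + 1) * (vSeq π n : ℝ) with hbT
  have hca : ∀ n, cR π p q n = p * aT n := by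
    intro n
    match n with
    | 0 =>
      rw [hc_zero, haT]
      simp [uSeq_zero]
    | (m + 1) =>
      unfold cR
      rw [haT]
      simp only [Nat.add_sub_cancel]
      rw [pow_succ]
      ring
  have hcb : ∀ n, bR π p q n = p * bT n := by
    intro n
    match n with
    | 0 =>
      rw [hb_zero, hbT]
      simp [vSeq_zero]
    | (m + 1) =>
      unfold bR
      rw [hbT]
      simp only [Nat.add_sub_cancel]
      rw [pow_succ]
      ring
  have hsaT : Summable aT := by
    have : Summable (fun n => (1 / p) * cR π p q n) := hsc.mul_left _
    refine this.congr fun n => ?_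
    rw [hca n]
    field_simp
  have hsbT : Summable bT := by
    have : Summable (fun n => (1 / p) * bR π p q n) := hsb.mul_left _
    refine this.congr fun n => ?_
    rw [hcb n]
    field_simp
  refine ⟨hsaT, ?_⟩
  have hCa : C = p * ∑' n, aT n := by
    rw [hC, tsum_congr hca, tsum_mul_left]
  have hBb : B = p * ∑' n, bT n := by
    rw [hB, tsum_congr hcb, tsum_mul_left]
  rw [hCa, hBb] at hδC
  have hpne : p ≠ 0 := ne_of_gt hp0
  have : p * (δ * ∑' n, aT n) = p * ∑' n, bT n := by
    rw [← hδC]; ring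
  exact mul_left_cancel₀ hpne this

end Analysis


end AuxProof

/-- **Equation (4.4).** Fix `δ ∈ (0,1)` and `p = (1−δ)/2`.  For every pattern
`π ∈ Av(231)`, the series `Σ_{σ ∈ Av(231)} p^(|σ|−1)(1−p)^(|σ|+1) c-occ(π,σ)` converges,
and `δ` times its sum equals
`Σ_{σ ∈ Av(231)} p^(|σ|−1)(1−p)^(|σ|+1) 𝟙{σ realizes π at its maximum}`.
(These are `E[c-occ(π,T_δ)]` and `ℙ(pat_J(T_δ)=π)` respectively.) -/
theorem expectation_cOcc_eq_inv_delta_mul_prob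
    {k : ℕ} (hk : 1 ≤ k) (π : Equiv.Perm (Fin k)) (hπ : Avoids perm231 π)
    (δ : ℝ) (hδ0 : 0 < δ) (hδ1 : δ < 1) :
    Summable (fun n : ℕ => ∑ σ ∈ AvSet perm231 n,
      ((1 - δ) / 2) ^ (n - 1) * (1 - (1 - δ) / 2) ^ (n + 1) * (cOcc π σ : ℝ))
    ∧ δ * (∑' n : ℕ, ∑ σ ∈ AvSet perm231 n,
        ((1 - δ) / 2) ^ (n - 1) * (1 - (1 - δ) / 2) ^ (n + 1) * (cOcc π σ : ℝ))
      = ∑' n : ℕ, ∑ σ ∈ AvSet perm231 n,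
          (if RealizesAtMax π σ then
            ((1 - δ) / 2) ^ (n - 1) * (1 - (1 - δ) / 2) ^ (n + 1) else 0) := by
  set p : ℝ := (1 - δ) / 2 with hp
  set q : ℝ := 1 - (1 - δ) / 2 with hq
  have hmain := main_aux hk π p q δ (by rw [hp]; linarith) (by rw [hq, hp])
    (by rw [hp]; ring) hδ0
  have hucast : ∀ n : ℕ, ((uSeq π n : ℕ) : ℝ) = ∑ σ ∈ AvSet perm231 n, (cOcc π σ : ℝ) := by
    intro n; rw [uSeq]; push_cast; rfl
  have hvcast : ∀ n : ℕ, ((vSeq π n : ℕ) : ℝ)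
      = ∑ σ ∈ AvSet perm231 n, (if RealizesAtMax π σ then (1 : ℝ) else 0) := by
    intro n; rw [vSeq]; push_cast; rfl
  have ha : ∀ n : ℕ, (∑ σ ∈ AvSet perm231 n, p ^ (n - 1) * q ^ (n + 1) * (cOcc π σ : ℝ))
      = p ^ (n - 1) * q ^ (n + 1) * (uSeq π n : ℝ) := by
    intro n
    rw [← Finset.mul_sum, hucast]
  have hb : ∀ n : ℕ, (∑ σ ∈ AvSet perm231 n,
      (if RealizesAtMax π σ then p ^ (n - 1) * q ^ (n + 1) else 0))
      = p ^ (n - 1) * q ^ (n + 1) * (vSeq π n : ℝ) := by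
    intro n
    have hsplit : ∀ σ ∈ AvSet perm231 n,
        (if RealizesAtMax π σ then p ^ (n - 1) * q ^ (n + 1) else 0)
          = p ^ (n - 1) * q ^ (n + 1) * (if RealizesAtMax π σ then (1 : ℝ) else 0) := by
      intro σ _; split_ifs <;> ring
    rw [Finset.sum_congr rfl hsplit, ← Finset.mul_sum, hvcast]
  refine ⟨hmain.1.congr fun n => (ha n).symm, ?_⟩
  rw [tsum_congr ha, tsum_congr hb]
  exact hmain.2
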